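/- Let u : [−τ₀, ∞) → [0,∞) be continuous, differentiable on (0,∞), satisfying u'(t) ≤ K(u(t) + u(t−τ(t))) for all t > 0, where K > 0 and τ : [0,∞) → [τ*, τ₀] with 0 < τ* ≤ τ₀. Let ū = max_{s∈[−τ₀,0]} u(s). Then for every k ≥ 1 and t ∈ ((k−1)τ*, kτ*], u(t) ≤ ū e^{Kt}(1 + Kτ*)^k. -/

import Mathlib

theorem delayed_gronwall (u u' τ : ℝ → ℝ) (K τstar τ₀ ubar : ℝ)
    (hK : 0 < K) (hτstar : 0 < τstar) (hτ₀ : τstar ≤ τ₀)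
    (hτ : ∀ t, 0 ≤ t → τstar ≤ τ t ∧ τ t ≤ τ₀)
    (hcont : ContinuousOn u (Set.Ici (-τ₀)))
    (hnonneg : ∀ t, -τ₀ ≤ t → 0 ≤ u t)
    (hderiv : ∀ t, 0 < t → HasDerivAt u (u' t) t)
    (hineq : ∀ t, 0 < t → u' t ≤ K * (u t + u (t - τ t)))
    (hubar : ∀ s ∈ Set.Icc (-τ₀) 0, u s ≤ ubar) :
    ∀ k : ℕ, 1 ≤ k → ∀ t, ((k : ℝ) - 1) * τstar < t → t ≤ (k : ℝ) * τstar →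
      u t ≤ ubar * Real.exp (K * t) * (1 + K * τstar) ^ k := by
  have hτ₀pos : 0 < τ₀ := lt_of_lt_of_le hτstar hτ₀
  have hubar0 : 0 ≤ ubar :=
    le_trans (hnonneg 0 (by linarith)) (hubar 0 ⟨by linarith, le_rfl⟩)
  have hP1 : (1:ℝ) ≤ 1 + K * τstar := by nlinarith
  have S : ∀ k : ℕ, ∀ t, -τ₀ ≤ t → t ≤ (k : ℝ) * τstar →
      u t ≤ ubar * Real.exp (K * max t 0) * (1 + K * τstar) ^ k := by
    intro k
    induction k with
    | zero =>
      intro t ht1 ht2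
      simp only [Nat.cast_zero, zero_mul] at ht2
      rw [max_eq_right ht2]
      simp only [mul_zero, Real.exp_zero, pow_zero, mul_one]
      exact hubar t ⟨ht1, ht2⟩
    | succ k IH =>
      intro t ht1 ht2
      by_cases hcase : t ≤ (k : ℝ) * τstar
      · have h1 := IH t ht1 hcase
        have h2 : ubar * Real.exp (K * max t 0) * (1 + K * τstar) ^ k ≤
            ubar * Real.exp (K * max t 0) * (1 + K * τstar) ^ (k+1) := by
          apply mul_le_mul_of_nonneg_left
          · exact pow_le_pow_right₀ hP1 (Nat.le_succ k)
          · positivity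
        linarith
      · push_neg at hcase
        set a : ℝ := (k : ℝ) * τstar with ha
        have ha0 : 0 ≤ a := by positivity
        have htpos : 0 < t := lt_of_le_of_lt ha0 hcase
        set P : ℝ := 1 + K * τstar with hPdef
        set C : ℝ := K * ubar * P ^ k with hC
        have hPk : (0:ℝ) < P ^ k := by positivity
        have hC0 : 0 ≤ C := by positivity
        have ht2' : t ≤ a + τstar := by
          push_cast at ht2
          simp only [ha]
          linarith
        -- derivative of w(s) = exp(-(K*s)) * u s - C * s
        have hgderiv : ∀ s ∈ Set.Ioo a t,
            HasDerivAt (fun s => Real.exp (-(K*s)) * u s - C * s)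
              (Real.exp (-(K*s)) * -K * u s + Real.exp (-(K*s)) * u' s - C) s := by
          intro s hs
          have hspos : 0 < s := lt_of_le_of_lt ha0 hs.1
          have h1 : HasDerivAt (fun s : ℝ => -(K * s)) (-K) s := by
            simpa using ((hasDerivAt_id s).const_mul K).fun_neg
          have h2 := (h1.exp.mul (hderiv s hspos))
          have h3 : HasDerivAt (fun s : ℝ => C * s) C s := by
            simpa using (hasDerivAt_id s).const_mul C
          exact h2.sub h3
        -- the derivative is nonpositive
        have hbound : ∀ s ∈ Set.Ioo a t,
            Real.exp (-(K*s)) * -K * u s + Real.exp (-(K*s)) * u' s - C ≤ 0 := by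
          intro s hs
          have hspos : 0 < s := lt_of_le_of_lt ha0 hs.1
          have hτs := hτ s hspos.le
          have hst1 : -τ₀ ≤ s - τ s := by linarith [hτs.2]
          have hst2 : s - τ s ≤ a := by
            have hs2 : s ≤ t := hs.2.le
            linarith [hτs.1]
          have hu2 := IH (s - τ s) hst1 hst2
          have hE : Real.exp (-(K*s)) * Real.exp (K * max (s - τ s) 0) ≤ 1 := by
            rw [← Real.exp_add]
            rw [show (1:ℝ) = Real.exp 0 by rw [Real.exp_zero]]
            apply Real.exp_le_exp.mpr
            have hm : max (s - τ s) 0 ≤ s := max_le (by linarith [hτs.1]) hspos.le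
            nlinarith [mul_le_mul_of_nonneg_left hm hK.le]
          have h3 : Real.exp (-(K*s)) * u (s - τ s) ≤ ubar * P ^ k := by
            calc Real.exp (-(K*s)) * u (s - τ s)
                ≤ Real.exp (-(K*s)) * (ubar * Real.exp (K * max (s - τ s) 0) * P ^ k) :=
                  mul_le_mul_of_nonneg_left hu2 (Real.exp_pos _).le
              _ = (Real.exp (-(K*s)) * Real.exp (K * max (s - τ s) 0)) * (ubar * P ^ k) := by
                  ring
              _ ≤ 1 * (ubar * P ^ k) := mul_le_mul_of_nonneg_right hE (by positivity)
              _ = ubar * P ^ k := one_mul _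
          have h4 := mul_le_mul_of_nonneg_left (hineq s hspos) (Real.exp_pos (-(K*s))).le
          have h5 := mul_le_mul_of_nonneg_left h3 hK.le
          have hCeq : C = K * (ubar * P ^ k) := by rw [hC]; ring
          nlinarith [Real.exp_pos (-(K*s))]
        -- monotonicity argument
        have hanti : AntitoneOn (fun s => Real.exp (-(K*s)) * u s - C * s)
            (Set.Icc a t) := by
          apply antitoneOn_of_deriv_nonpos (convex_Icc a t)
          · apply ContinuousOn.sub
            · apply ContinuousOn.mul
              · exact (Real.continuous_exp.comp
                  (continuous_const.mul continuous_id).neg).continuousOn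
              · exact hcont.mono (fun x hx => by
                  simp only [Set.mem_Ici]
                  have := hx.1
                  linarith)
            · exact (continuous_const.mul continuous_id).continuousOn
          · intro s hs
            rw [interior_Icc] at hs
            exact (hgderiv s hs).differentiableAt.differentiableWithinAt
          · intro s hs
            rw [interior_Icc] at hs
            rw [(hgderiv s hs).deriv]
            exact hbound s hs
        have hat := hanti (Set.left_mem_Icc.mpr hcase.le)
          (Set.right_mem_Icc.mpr hcase.le) hcase.le
        simp only at hat
        -- bound at the left endpoint
        have hwa : Real.exp (-(K*a)) * u a ≤ ubar * P ^ k := by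
          have hIa := IH a (by linarith) le_rfl
          rw [max_eq_left ha0] at hIa
          calc Real.exp (-(K*a)) * u a
              ≤ Real.exp (-(K*a)) * (ubar * Real.exp (K*a) * P ^ k) :=
                mul_le_mul_of_nonneg_left hIa (Real.exp_pos _).le
            _ = (Real.exp (-(K*a)) * Real.exp (K*a)) * (ubar * P ^ k) := by ring
            _ = ubar * P ^ k := by
                rw [← Real.exp_add, neg_add_cancel, Real.exp_zero, one_mul]
        have hCt : C * (t - a) ≤ C * τstar :=
          mul_le_mul_of_nonneg_left (by linarith) hC0
        have hwt : Real.exp (-(K*t)) * u t ≤ ubar * P ^ (k+1) := by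
          have h6 : Real.exp (-(K*t)) * u t ≤ ubar * P ^ k + C * τstar := by linarith
          calc Real.exp (-(K*t)) * u t ≤ ubar * P ^ k + C * τstar := h6
            _ = ubar * P ^ (k+1) := by rw [hC, hPdef]; ring
        rw [max_eq_left htpos.le]
        calc u t = Real.exp (K*t) * (Real.exp (-(K*t)) * u t) := by
              rw [← mul_assoc, ← Real.exp_add, add_neg_cancel, Real.exp_zero, one_mul]
          _ ≤ Real.exp (K*t) * (ubar * P ^ (k+1)) :=
              mul_le_mul_of_nonneg_left hwt (Real.exp_pos _).le
          _ = ubar * Real.exp (K*t) * P ^ (k+1) := by ring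
  intro k hk t ht1 ht2
  have hk1 : (1:ℝ) ≤ (k:ℝ) := by exact_mod_cast hk
  have htpos : 0 < t := lt_of_le_of_lt (by nlinarith) ht1
  have hS := S k t (by linarith) ht2
  rwa [max_eq_left htpos.le] at hS
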